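/- Let M be a Milnor-Witt cycle module over a perfect field k, X a scheme with virtual bundle 𝒱_X, and (Z, i, X, j, U) a boundary triple (Z closed in X with open complement U). Then there is a long exact sequence of Chow-Witt groups with coefficients: ⋯ → A_p(Z,M,𝒱_Z) → A_p(X,M,𝒱_X) → A_p(U,M,𝒱_U) → A_{p−1}(Z,M,𝒱_Z) → ⋯, induced by i_*, j^*, and the boundary map ∂^U_Z. -/

import Mathlib

/-!  STATEMENT 15.  For a Milnor-Witt cycle module `M` over a perfect field `k`, a scheme
`X` with virtual bundle `𝒱_X` and a boundary triple `(Z, i, X, j, U)`, there is a long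
exact sequence of Chow-Witt groups with coefficients
`⋯ → A_p(Z,M,𝒱_Z) → A_p(X,M,𝒱_X) → A_p(U,M,𝒱_U) → A_{p−1}(Z,M,𝒱_Z) → ⋯`
induced by `i_*`, `j^*` and the boundary map `∂^U_Z`.

Formalization.  The cycle complexes of `Z` and `U` are ℤ-graded complexes `CZ`, `CU`
with differentials `dZ`, `dU`; the boundary map `∂^U_Z` is a family
`bd : CU p →+ CZ (p−1)` satisfying `d_Z ∘ ∂ = − ∂ ∘ d_U`.  The cycle complex of `X`
decomposes as `C_p(X) = C_p(Z) ⊕ C_p(U)` with differential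
`(z, u) ↦ (d_Z z + ∂ u, d_U u)`.  `Hmlgy` is the homology of such a complex, and the
conclusion asserts the existence of maps `iH` (induced by `i_*`), `jH` (induced by `j^*`)
and `δ` (induced by `∂^U_Z`), characterized on classes of cycles, forming an exact
sequence at every spot. -/

/-- Homology at spot `p` of a ℤ-graded complex `(C, d)`. -/
noncomputable def Hmlgy (C : ℤ → Type) [∀ p, AddCommGroup (C p)]
    (d : ∀ p q : ℤ, q + 1 = p → (C p →+ C q)) (p : ℤ) : Type :=
  (d p (p - 1) (sub_add_cancel p 1)).ker ⧸
    ((d (p + 1) p rfl).range.addSubgroupOf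
      (d p (p - 1) (sub_add_cancel p 1)).ker)

noncomputable instance (C : ℤ → Type) [∀ p, AddCommGroup (C p)]
    (d : ∀ p q : ℤ, q + 1 = p → (C p →+ C q)) (p : ℤ) : AddCommGroup (Hmlgy C d p) :=
  inferInstanceAs (AddCommGroup (_ ⧸ _))

/-- The class in homology of a cycle (an element of the kernel of the differential). -/
noncomputable def HmlgyMk (C : ℤ → Type) [∀ p, AddCommGroup (C p)]
    (d : ∀ p q : ℤ, q + 1 = p → (C p →+ C q)) (p : ℤ)
    (x : C p) (hx : x ∈ (d p (p - 1) (by omega)).ker) : Hmlgy C d p :=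
  QuotientAddGroup.mk (⟨x, hx⟩ : (d p (p - 1) (by omega : (p - 1) + 1 = p)).ker)

/-- The differential of the complex `C_*(X) = C_*(Z) ⊕ C_*(U)`:
`(z, u) ↦ (d_Z z + ∂ u, d_U u)`. -/
noncomputable def dXmap (CZ CU : ℤ → Type)
    [∀ p, AddCommGroup (CZ p)] [∀ p, AddCommGroup (CU p)]
    (dZ : ∀ p q : ℤ, q + 1 = p → (CZ p →+ CZ q))
    (dU : ∀ p q : ℤ, q + 1 = p → (CU p →+ CU q))
    (bd : ∀ p q : ℤ, q + 1 = p → (CU p →+ CZ q)) :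
    ∀ p q : ℤ, q + 1 = p → (CZ p × CU p →+ CZ q × CU q) := fun p q h =>
  AddMonoidHom.prod
    ((dZ p q h).comp (AddMonoidHom.fst _ _) + (bd p q h).comp (AddMonoidHom.snd _ _))
    ((dU p q h).comp (AddMonoidHom.snd _ _))

section
variable {C C' : ℤ → Type} [∀ p, AddCommGroup (C p)] [∀ p, AddCommGroup (C' p)]

theorem les_cast_apply (f : ∀ p q : ℤ, q + 1 = p → (C p →+ C' q))
    (p p' q : ℤ) (h : q + 1 = p) (h' : q + 1 = p') (x : C p) :
    f p' q h' (cast (congrArg C (by omega : p = p')) x) = f p q h x := by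
  subst h; subst h'; rfl

noncomputable def mkHom (d : ∀ p q : ℤ, q + 1 = p → (C p →+ C q))
    (d' : ∀ p q : ℤ, q + 1 = p → (C' p →+ C' q))
    (p q : ℤ) (f : C p →+ C' q)
    (hker : ∀ x : C p, x ∈ (d p (p - 1) (by omega)).ker → f x ∈ (d' q (q - 1) (by omega)).ker)
    (hrange : ∀ x : C (p + 1), f (d (p + 1) p rfl x) ∈ (d' (q + 1) q rfl).range) :
    Hmlgy C d p →+ Hmlgy C' d' q :=
  QuotientAddGroup.lift _
    ((QuotientAddGroup.mk' _).comp
      ((f.domRestrict ((d p (p - 1) (by omega)).ker)).codRestrict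
        ((d' q (q - 1) (by omega)).ker) (fun x => hker x x.2)))
    (fun x hx => by
      obtain ⟨y, hy⟩ := AddSubgroup.mem_addSubgroupOf.mp hx
      exact (QuotientAddGroup.eq_zero_iff _).mpr
        (AddSubgroup.mem_addSubgroupOf.mpr
          (show f ↑x ∈ (d' (q + 1) q rfl).range from hy ▸ hrange y)))

theorem mkHom_mk (d : ∀ p q : ℤ, q + 1 = p → (C p →+ C q))
    (d' : ∀ p q : ℤ, q + 1 = p → (C' p →+ C' q))
    (p q : ℤ) (f : C p →+ C' q) (hker) (hrange)
    (x : (d p (p - 1) (sub_add_cancel p 1)).ker) :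
    mkHom d d' p q f hker hrange (QuotientAddGroup.mk x) =
      QuotientAddGroup.mk
        (⟨f x, hker x x.2⟩ : (d' q (q - 1) (sub_add_cancel q 1)).ker) := rfl

theorem mkHom_mk' (d : ∀ p q : ℤ, q + 1 = p → (C p →+ C q))
    (d' : ∀ p q : ℤ, q + 1 = p → (C' p →+ C' q))
    (p q : ℤ) (f : C p →+ C' q) (hker) (hrange)
    (x : C p) (hx : x ∈ (d p (p - 1) (by omega)).ker)
    (hfx : f x ∈ (d' q (q - 1) (by omega)).ker) :
    mkHom d d' p q f hker hrange (HmlgyMk C d p x hx) = HmlgyMk C' d' q (f x) hfx := rfl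
end

theorem dXmap_apply (CZ CU : ℤ → Type)
    [∀ p, AddCommGroup (CZ p)] [∀ p, AddCommGroup (CU p)]
    (dZ : ∀ p q : ℤ, q + 1 = p → (CZ p →+ CZ q))
    (dU : ∀ p q : ℤ, q + 1 = p → (CU p →+ CU q))
    (bd : ∀ p q : ℤ, q + 1 = p → (CU p →+ CZ q))
    (p q : ℤ) (h : q + 1 = p) (x : CZ p × CU p) :
    dXmap CZ CU dZ dU bd p q h x = (dZ p q h x.1 + bd p q h x.2, dU p q h x.2) := rfl

theorem localization_long_exact_sequence
    (CZ CU : ℤ → Type) [∀ p, AddCommGroup (CZ p)] [∀ p, AddCommGroup (CU p)]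
    (dZ : ∀ p q : ℤ, q + 1 = p → (CZ p →+ CZ q))
    (dU : ∀ p q : ℤ, q + 1 = p → (CU p →+ CU q))
    (bd : ∀ p q : ℤ, q + 1 = p → (CU p →+ CZ q))
    (hZ : ∀ (p q r : ℤ) (h : q + 1 = p) (h' : r + 1 = q) (x : CZ p),
      dZ q r h' (dZ p q h x) = 0)
    (hU : ∀ (p q r : ℤ) (h : q + 1 = p) (h' : r + 1 = q) (x : CU p),
      dU q r h' (dU p q h x) = 0)
    (hanti : ∀ (p q r : ℤ) (h : q + 1 = p) (h' : r + 1 = q) (x : CU p),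
      dZ q r h' (bd p q h x) = - bd q r h' (dU p q h x)) :
    ∃ (iH : ∀ p : ℤ, Hmlgy CZ dZ p →+ Hmlgy (fun p => CZ p × CU p) (dXmap CZ CU dZ dU bd) p)
      (jH : ∀ p : ℤ, Hmlgy (fun p => CZ p × CU p) (dXmap CZ CU dZ dU bd) p →+ Hmlgy CU dU p)
      (δ : ∀ p : ℤ, Hmlgy CU dU p →+ Hmlgy CZ dZ (p - 1)),
      -- `iH` is induced by `i_* : z ↦ (z, 0)`
      (∀ (p : ℤ) (z : CZ p) (hz : z ∈ (dZ p (p - 1) (by omega)).ker)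
          (hz' : (z, (0 : CU p)) ∈
            ((dXmap CZ CU dZ dU bd) p (p - 1) (by omega)).ker),
        iH p (HmlgyMk CZ dZ p z hz) =
          HmlgyMk (fun p => CZ p × CU p) (dXmap CZ CU dZ dU bd) p (z, 0) hz') ∧
      -- `jH` is induced by `j^* : (z, u) ↦ u`
      (∀ (p : ℤ) (z : CZ p) (u : CU p)
          (hzu : (z, u) ∈ ((dXmap CZ CU dZ dU bd) p (p - 1) (by omega)).ker)
          (hu : u ∈ (dU p (p - 1) (by omega)).ker),
        jH p (HmlgyMk (fun p => CZ p × CU p) (dXmap CZ CU dZ dU bd) p (z, u) hzu) =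
          HmlgyMk CU dU p u hu) ∧
      -- `δ` is induced by the boundary map `∂^U_Z`
      (∀ (p : ℤ) (u : CU p) (hu : u ∈ (dU p (p - 1) (by omega)).ker)
          (hbu : bd p (p - 1) (by omega) u ∈
            (dZ (p - 1) (p - 1 - 1) (by omega)).ker),
        δ p (HmlgyMk CU dU p u hu) =
          HmlgyMk CZ dZ (p - 1) (bd p (p - 1) (by omega) u) hbu) ∧
      -- exactness of the long sequence
      (∀ p : ℤ, Function.Exact (iH p) (jH p)) ∧
      (∀ p : ℤ, Function.Exact (jH p) (δ p)) ∧
      (∀ p : ℤ, Function.Exact (δ p) (iH (p - 1))) := by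
  refine ⟨fun p => mkHom dZ (dXmap CZ CU dZ dU bd) p p (AddMonoidHom.inl (CZ p) (CU p))
      (fun x hx => ?_) (fun x => ?_),
    fun p => mkHom (dXmap CZ CU dZ dU bd) dU p p (AddMonoidHom.snd (CZ p) (CU p))
      (fun x hx => ?_) (fun x => ?_),
    fun p => mkHom dU dZ p (p - 1) (bd p (p - 1) (by omega))
      (fun x hx => ?_) (fun x => ?_),
    fun p z hz hz' => rfl, fun p z u hzu hu => rfl, fun p u hu hbu => rfl,
    ?_, ?_, ?_⟩
  · -- iH hker
    simp only [AddMonoidHom.mem_ker] at hx ⊢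
    simp [dXmap_apply, hx, Prod.ext_iff]
  · -- iH hrange
    exact ⟨(x, 0), by simp [dXmap_apply, Prod.ext_iff]⟩
  · -- jH hker
    simp only [AddMonoidHom.mem_ker, dXmap_apply, Prod.ext_iff] at hx
    exact hx.2
  · -- jH hrange
    exact ⟨x.2, rfl⟩
  · -- δ hker
    simp only [AddMonoidHom.mem_ker] at hx ⊢
    rw [hanti p (p - 1) (p - 1 - 1) (by omega) (by omega) x, hx, map_zero, neg_zero]
  · -- δ hrange
    refine ⟨cast (congrArg CZ (by omega : p = p - 1 + 1)) (-(bd (p + 1) p rfl x)), ?_⟩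
    rw [les_cast_apply dZ p (p - 1 + 1) (p - 1) (by omega) rfl, map_neg,
      hanti (p + 1) p (p - 1) rfl (by omega) x, neg_neg]
  · -- exactness at X : ker jH = range iH
    intro p y
    induction y using QuotientAddGroup.induction_on with
    | H a =>
      obtain ⟨⟨z, u⟩, hzu⟩ := a
      have hzu' : dZ p (p - 1) (by omega) z + bd p (p - 1) (by omega) u = 0 ∧
          dU p (p - 1) (by omega) u = 0 := by
        have h := hzu
        simp only [AddMonoidHom.mem_ker, dXmap_apply, Prod.ext_iff,
          Prod.fst_zero, Prod.snd_zero] at h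
        exact h
      beta_reduce
      erw [mkHom_mk]
      constructor
      · intro h0
        erw [QuotientAddGroup.eq_zero_iff] at h0
        obtain ⟨u', hu'⟩ := AddSubgroup.mem_addSubgroupOf.mp h0
        have hu2 : dU (p + 1) p rfl u' = u := hu'
        have hk : z - bd (p + 1) p rfl u' ∈ (dZ p (p - 1) (by omega)).ker := by
          simp only [AddMonoidHom.mem_ker, map_sub]
          rw [hanti (p + 1) p (p - 1) rfl (by omega) u', hu2, sub_neg_eq_add]
          exact hzu'.1
        refine ⟨HmlgyMk CZ dZ p (z - bd (p + 1) p rfl u') hk, ?_⟩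
        refine QuotientAddGroup.eq.mpr (AddSubgroup.mem_addSubgroupOf.mpr ⟨(0, u'), ?_⟩)
        show dXmap CZ CU dZ dU bd (p + 1) p rfl (0, u') =
          -((z - bd (p + 1) p rfl u', (0 : CU p))) + (z, u)
        rw [dXmap_apply]
        simp [Prod.ext_iff, hu2]
      · rintro ⟨x, hx⟩
        induction x using QuotientAddGroup.induction_on with
        | H b =>
          obtain ⟨z0, hz0⟩ := b
          have hx' := QuotientAddGroup.eq.mp hx
          obtain ⟨⟨z', u''⟩, hw⟩ := AddSubgroup.mem_addSubgroupOf.mp hx'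
          erw [QuotientAddGroup.eq_zero_iff]
          refine AddSubgroup.mem_addSubgroupOf.mpr ⟨u'', ?_⟩
          have h2 : dU (p + 1) p rfl u'' = -(0 : CU p) + u := congrArg Prod.snd hw
          show dU (p + 1) p rfl u'' = u
          simpa [dXmap_apply] using h2
  · -- exactness at U : ker δ = range jH
    intro p y
    induction y using QuotientAddGroup.induction_on with
    | H a =>
      obtain ⟨u, hu⟩ := a
      beta_reduce
      erw [mkHom_mk]
      constructor
      · intro h0
        erw [QuotientAddGroup.eq_zero_iff] at h0
        obtain ⟨w, hw⟩ := AddSubgroup.mem_addSubgroupOf.mp h0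
        have hw2 : dZ p (p - 1) (by omega)
            (cast (congrArg CZ (by omega : p - 1 + 1 = p)) w) = bd p (p - 1) (by omega) u :=
          (les_cast_apply dZ (p - 1 + 1) p (p - 1) rfl (by omega) w).trans hw
        set z' : CZ p := cast (congrArg CZ (by omega : p - 1 + 1 = p)) w with hz'
        have hm : (-z', u) ∈ (dXmap CZ CU dZ dU bd p (p - 1) (by omega)).ker := by
          simp only [AddMonoidHom.mem_ker, dXmap_apply, Prod.ext_iff,
            Prod.fst_zero, Prod.snd_zero, map_neg]
          exact ⟨by rw [hw2]; abel, hu⟩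
        exact ⟨HmlgyMk (fun p => CZ p × CU p) (dXmap CZ CU dZ dU bd) p (-z', u) hm, rfl⟩
      · rintro ⟨x, hx⟩
        induction x using QuotientAddGroup.induction_on with
        | H b =>
          obtain ⟨⟨z, u0⟩, hb⟩ := b
          have hb' : dZ p (p - 1) (by omega) z + bd p (p - 1) (by omega) u0 = 0 := by
            have h := hb
            simp only [AddMonoidHom.mem_ker, dXmap_apply, Prod.ext_iff,
              Prod.fst_zero, Prod.snd_zero] at h
            exact h.1
          have hx' := QuotientAddGroup.eq.mp hx
          obtain ⟨v, hv⟩ := AddSubgroup.mem_addSubgroupOf.mp hx'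
          have hv' : dU (p + 1) p rfl v = -u0 + u := hv
          erw [QuotientAddGroup.eq_zero_iff]
          refine AddSubgroup.mem_addSubgroupOf.mpr
            ⟨cast (congrArg CZ (by omega : p = p - 1 + 1)) (-z - bd (p + 1) p rfl v), ?_⟩
          rw [les_cast_apply dZ p (p - 1 + 1) (p - 1) (by omega) rfl, map_sub, map_neg,
            hanti (p + 1) p (p - 1) rfl (by omega) v, sub_neg_eq_add, hv']
          show -dZ p (p - 1) (by omega) z + bd p (p - 1) (by omega) (-u0 + u) =
            bd p (p - 1) (by omega) u
          have hzeq : dZ p (p - 1) (by omega : p - 1 + 1 = p) z =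
              -bd p (p - 1) (by omega) u0 := eq_neg_of_add_eq_zero_left hb'
          rw [hzeq, map_add, map_neg]
          abel
  · -- exactness at Z : ker iH = range δ
    intro p y
    induction y using QuotientAddGroup.induction_on with
    | H a =>
      obtain ⟨z, hz⟩ := a
      beta_reduce
      erw [mkHom_mk]
      constructor
      · intro h0
        erw [QuotientAddGroup.eq_zero_iff] at h0
        obtain ⟨⟨z', u'⟩, hw⟩ := AddSubgroup.mem_addSubgroupOf.mp h0
        have hw1 : dZ (p - 1 + 1) (p - 1) rfl z' + bd (p - 1 + 1) (p - 1) rfl u' = z :=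
          congrArg Prod.fst hw
        have hw2 : dU (p - 1 + 1) (p - 1) rfl u' = 0 := congrArg Prod.snd hw
        set u'' : CU p := cast (congrArg CU (by omega : p - 1 + 1 = p)) u' with hu''def
        have hu'' : u'' ∈ (dU p (p - 1) (by omega)).ker := by
          rw [AddMonoidHom.mem_ker, hu''def,
            les_cast_apply dU (p - 1 + 1) p (p - 1) rfl (by omega) u']
          exact hw2
        refine ⟨HmlgyMk CU dU p u'' hu'', ?_⟩
        have hbd : bd p (p - 1) (by omega : p - 1 + 1 = p) u'' =
            bd (p - 1 + 1) (p - 1) rfl u' :=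
          les_cast_apply bd (p - 1 + 1) p (p - 1) rfl (by omega) u'
        refine QuotientAddGroup.eq.mpr (AddSubgroup.mem_addSubgroupOf.mpr ⟨z', ?_⟩)
        show dZ (p - 1 + 1) (p - 1) rfl z' = -(bd p (p - 1) (by omega) u'') + z
        rw [hbd] at *
        rw [← hw1]
        abel
      · rintro ⟨x, hx⟩
        induction x using QuotientAddGroup.induction_on with
        | H b =>
          obtain ⟨u, hu⟩ := b
          have hx' := QuotientAddGroup.eq.mp hx
          obtain ⟨w, hw⟩ := AddSubgroup.mem_addSubgroupOf.mp hx'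
          have hw' : dZ (p - 1 + 1) (p - 1) rfl w = -(bd p (p - 1) (by omega) u) + z := hw
          erw [QuotientAddGroup.eq_zero_iff]
          refine AddSubgroup.mem_addSubgroupOf.mpr
            ⟨(w, cast (congrArg CU (by omega : p = p - 1 + 1)) u), ?_⟩
          show dXmap CZ CU dZ dU bd (p - 1 + 1) (p - 1) rfl
              (w, cast (congrArg CU (by omega : p = p - 1 + 1)) u) =
            (z, (0 : CU (p - 1)))
          rw [dXmap_apply]
          refine Prod.ext ?_ ?_
          · show dZ (p - 1 + 1) (p - 1) rfl w +
              bd (p - 1 + 1) (p - 1) rfl (cast (congrArg CU (by omega : p = p - 1 + 1)) u) = z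
            rw [les_cast_apply bd p (p - 1 + 1) (p - 1) (by omega) rfl u, hw']
            abel
          · show dU (p - 1 + 1) (p - 1) rfl (cast (congrArg CU (by omega : p = p - 1 + 1)) u) = 0
            rw [les_cast_apply dU p (p - 1 + 1) (p - 1) (by omega) rfl u]
            exact hu
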